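/- arXiv:2312.01434 — 2 statements merged into one kernel-verified Lean document; each statement's English description precedes it below -/
import Mathlib

section
/- Let n ≥ 1, let σ be the permutation of F_{3^n} with σ(0) = 1, σ(1) = −1, σ(−1) = 0, and σ(x) = x for all other x, and let f(X) = (σ(X))^{3^n−2} (the composition of the inverse function with the 3-cycle (0 1 −1)). Then the (classical) differential uniformity of f is Δ_f = 3 if n is odd, and Δ_f = 4 if n is even. -/
open Finset

/-- The `c`-DDT entry of `f` at `(a, b)`:
the number of `x` with `f (x + a) - c * f x = b`. -/
def cDDT {F : Type*} [Field F] [Fintype F] [DecidableEq F]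
    (f : F → F) (c a b : F) : ℕ :=
  (Finset.univ.filter (fun x : F => f (x + a) - c * f x = b)).card

/-- The `c`-differential uniformity of `f`: the maximum of the `c`-DDT entries
over all `a, b`, where `a ≠ 0` is required when `c = 1`. -/
def cDU {F : Type*} [Field F] [Fintype F] [DecidableEq F]
    (f : F → F) (c : F) : ℕ :=
  (Finset.univ.filter (fun ab : F × F => c = 1 → ab.1 ≠ 0)).sup
    (fun ab => cDDT f c ab.1 ab.2)

/-- The classical differential uniformity of `f`. -/
def DU {F : Type*} [Field F] [Fintype F] [DecidableEq F] (f : F → F) : ℕ :=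
  cDU f 1

/-- The BCT entry of `f` at `(a, b)`: the number of pairs `(x, y)` with
`f x - f y = b` and `f (x + a) - f (y + a) = b`. -/
def BCT {F : Type*} [Field F] [Fintype F] [DecidableEq F]
    (f : F → F) (a b : F) : ℕ :=
  (Finset.univ.filter (fun xy : F × F =>
    f xy.1 - f xy.2 = b ∧ f (xy.1 + a) - f (xy.2 + a) = b)).card

/-- The boomerang uniformity of `f`: the maximum of the BCT entries over all
nonzero `a, b`. -/
def BU {F : Type*} [Field F] [Fintype F] [DecidableEq F] (f : F → F) : ℕ :=
  (Finset.univ.filter (fun ab : F × F => ab.1 ≠ 0 ∧ ab.2 ≠ 0)).sup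
    (fun ab => BCT f ab.1 ab.2)

/-- The quadratic character: `χ 0 = 0`, `χ α = 1` if `α` is a nonzero square,
and `χ α = -1` otherwise. -/
noncomputable def chi {F : Type*} [Field F] (α : F) : ℤ :=
  letI := Classical.dec (α = 0)
  letI := Classical.dec (IsSquare α)
  if α = 0 then 0 else if IsSquare α then 1 else -1

/-- The `c`-differential spectrum entry `ω_i` of a power function:
the number of `b` with `cΔ_f(1, b) = i`. -/
def omegaSpec {F : Type*} [Field F] [Fintype F] [DecidableEq F]
    (f : F → F) (c : F) (i : ℕ) : ℕ :=
  (Finset.univ.filter (fun b : F => cDDT f c 1 b = i)).card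

/-- The boomerang spectrum entry `v_i` of a power function:
the number of nonzero `b` with `B_f(1, b) = i`. -/
def vSpec {F : Type*} [Field F] [Fintype F] [DecidableEq F]
    (f : F → F) (i : ℕ) : ℕ :=
  (Finset.univ.filter (fun b : F => b ≠ 0 ∧ BCT f 1 b = i)).card

private lemma quad_card {F : Type*} [Field F] [Fintype F] [DecidableEq F] (α β γ : F) (hα : α ≠ 0) :
    (univ.filter fun x : F => α*x^2 + β*x + γ = 0).card ≤ 2 := by
  by_contra h
  push_neg at h
  rw [Finset.two_lt_card_iff] at h
  obtain ⟨x, y, z, hx, hy, hz, hxy, hxz, hyz⟩ := h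
  simp only [mem_filter, mem_univ, true_and] at hx hy hz
  have h1 : (x - y) * (α*(x+y) + β) = 0 := by linear_combination hx - hy
  have h2 : (x - z) * (α*(x+z) + β) = 0 := by linear_combination hx - hz
  have h1' : α*(x+y) + β = 0 := by
    rcases mul_eq_zero.mp h1 with h | h
    · exact absurd (sub_eq_zero.mp h) hxy
    · exact h
  have h2' : α*(x+z) + β = 0 := by
    rcases mul_eq_zero.mp h2 with h | h
    · exact absurd (sub_eq_zero.mp h) hxz
    · exact h
  have h4 : α * (y - z) = 0 := by linear_combination h1' - h2'
  rcases mul_eq_zero.mp h4 with h | h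
  · exact hα h
  · exact hyz (sub_eq_zero.mp h)

private lemma key_bound {F : Type*} [Field F] [Fintype F] [DecidableEq F]
    (h3 : (3:F) = 0) (f : F → F)
    (hf0 : f 0 = 1) (hf1 : f 1 = -1) (hfm : f (-1) = 0)
    (hfi : ∀ x : F, x ≠ 0 → x ≠ 1 → x ≠ -1 → f x = x⁻¹)
    (a b : F) (ha : a ≠ 0) :
    ((univ.filter fun x : F => f (x + a) - f x = b).card ≤ 4) ∧
    (¬ IsSquare (-1 : F) → (univ.filter fun x : F => f (x + a) - f x = b).card ≤ 3) := by
  have hne : (1:F) ≠ -1 := fun h => one_ne_zero (by linear_combination h3 - h : (1:F) = 0)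
  have hm0 : (-1:F) ≠ 0 := by simp
  by_cases ha1 : a = 1
  · subst ha1
    by_cases hb : b = 1
    · subst hb
      have hsub : (univ.filter fun x : F => f (x + 1) - f x = 1) ⊆ {0, 1, -1} := by
        intro x hx
        simp only [mem_filter, mem_univ, true_and] at hx
        by_contra hmem
        simp only [mem_insert, mem_singleton, not_or] at hmem
        obtain ⟨hx0, hx1, hxm⟩ := hmem
        have hxa0 : x + 1 ≠ 0 := fun h => hxm (by linear_combination h)
        have hxa1 : x + 1 ≠ 1 := fun h => hx0 (by linear_combination h)
        have hxam : x + 1 ≠ -1 := fun h => hx1 (by linear_combination h - h3)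
        rw [hfi _ hxa0 hxa1 hxam, hfi _ hx0 hx1 hxm] at hx
        field_simp at hx
        have hq : (x - 1)^2 = 0 := by linear_combination -hx - x*h3
        exact hx1 (sub_eq_zero.mp (pow_eq_zero_iff (two_ne_zero (α := ℕ)) |>.mp hq))
      refine ⟨?_, fun _ => ?_⟩ <;>
      · refine le_trans (card_le_card hsub) (le_trans (card_insert_le _ _) ?_)
        refine le_trans (Nat.succ_le_succ (card_insert_le _ _)) ?_
        simp
    · -- b ≠ 1
      have hsub : (univ.filter fun x : F => f (x + 1) - f x = b) ⊆
          (univ.filter fun x : F => b*x^2 + b*x + 1 = 0) := by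
        intro x hx
        simp only [mem_filter, mem_univ, true_and] at hx ⊢
        have hx0 : x ≠ 0 := by
          rintro rfl
          rw [zero_add, hf1, hf0] at hx
          exact hb (by linear_combination -hx - h3)
        have hx1 : x ≠ 1 := by
          rintro rfl
          rw [show (1:F)+1 = -1 by linear_combination h3, hfm, hf1] at hx
          exact hb (by linear_combination -hx)
        have hxm : x ≠ -1 := by
          rintro rfl
          rw [neg_add_cancel, hf0, hfm] at hx
          exact hb (by linear_combination -hx)
        have hxa0 : x + 1 ≠ 0 := fun h => hxm (by linear_combination h)
        have hxa1 : x + 1 ≠ 1 := fun h => hx0 (by linear_combination h)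
        have hxam : x + 1 ≠ -1 := fun h => hx1 (by linear_combination h - h3)
        rw [hfi _ hxa0 hxa1 hxam, hfi _ hx0 hx1 hxm] at hx
        field_simp at hx
        linear_combination -hx
      have hcard : (univ.filter fun x : F => f (x + 1) - f x = b).card ≤ 2 := by
        by_cases hb0 : b = 0
        · subst hb0
          refine le_trans (card_le_card hsub) ?_
          have : (univ.filter fun x : F => (0:F)*x^2 + 0*x + 1 = 0) = ∅ := by
            apply filter_false_of_mem
            intro x _
            simp
          rw [this]
          simp
        · exact le_trans (card_le_card hsub) (quad_card b b 1 hb0)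
      exact ⟨le_trans hcard (by norm_num), fun _ => le_trans hcard (by norm_num)⟩
  · by_cases ham : a = -1
    · subst ham
      by_cases hb : b = -1
      · subst hb
        have hsub : (univ.filter fun x : F => f (x + -1) - f x = -1) ⊆ {0, 1, -1} := by
          intro x hx
          simp only [mem_filter, mem_univ, true_and] at hx
          by_contra hmem
          simp only [mem_insert, mem_singleton, not_or] at hmem
          obtain ⟨hx0, hx1, hxm⟩ := hmem
          have hxa0 : x + -1 ≠ 0 := fun h => hx1 (by linear_combination h)
          have hxa1 : x + -1 ≠ 1 := fun h => hxm (by linear_combination h + h3)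
          have hxam : x + -1 ≠ -1 := fun h => hx0 (by linear_combination h)
          rw [hfi _ hxa0 hxa1 hxam, hfi _ hx0 hx1 hxm] at hx
          field_simp at hx
          have hq : (x + 1)^2 = 0 := by linear_combination hx + x*h3
          exact hxm (by linear_combination (pow_eq_zero_iff (two_ne_zero (α := ℕ)) |>.mp hq))
        refine ⟨?_, fun _ => ?_⟩ <;>
        · refine le_trans (card_le_card hsub) (le_trans (card_insert_le _ _) ?_)
          refine le_trans (Nat.succ_le_succ (card_insert_le _ _)) ?_
          simp
      · have hsub : (univ.filter fun x : F => f (x + -1) - f x = b) ⊆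
            (univ.filter fun x : F => b*x^2 + (-b)*x + (-1) = 0) := by
          intro x hx
          simp only [mem_filter, mem_univ, true_and] at hx ⊢
          have hx0 : x ≠ 0 := by
            rintro rfl
            rw [zero_add, hfm, hf0] at hx
            exact hb (by linear_combination -hx)
          have hx1 : x ≠ 1 := by
            rintro rfl
            rw [show (1:F) + -1 = 0 by ring, hf0, hf1] at hx
            exact hb (by linear_combination -hx + h3)
          have hxm : x ≠ -1 := by
            rintro rfl
            rw [show (-1:F) + -1 = 1 by linear_combination -h3, hf1, hfm] at hx
            exact hb (by linear_combination -hx)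
          have hxa0 : x + -1 ≠ 0 := fun h => hx1 (by linear_combination h)
          have hxa1 : x + -1 ≠ 1 := fun h => hxm (by linear_combination h + h3)
          have hxam : x + -1 ≠ -1 := fun h => hx0 (by linear_combination h)
          rw [hfi _ hxa0 hxa1 hxam, hfi _ hx0 hx1 hxm] at hx
          field_simp at hx
          linear_combination -hx
        have hcard : (univ.filter fun x : F => f (x + -1) - f x = b).card ≤ 2 := by
          by_cases hb0 : b = 0
          · subst hb0
            refine le_trans (card_le_card hsub) ?_
            have : (univ.filter fun x : F => (0:F)*x^2 + (-(0:F))*x + (-1) = 0) = ∅ := by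
              apply filter_false_of_mem
              intro x _
              simp
            rw [this]
            simp
          · exact le_trans (card_le_card hsub) (quad_card b (-b) (-1) hb0)
        exact ⟨le_trans hcard (by norm_num), fun _ => le_trans hcard (by norm_num)⟩
    · -- generic a
      set S := univ.filter (fun x : F => f (x + a) - f x = b) with hSdef
      have sol : ∀ x : F, x ∈ S → f (x + a) - f x = b := fun x hx => (mem_filter.mp hx).2
      have hA0 : (1:F) + a ≠ 0 := fun h => ham (by linear_combination h)
      have hA1 : (1:F) + a ≠ 1 := fun h => ha (by linear_combination h)
      have hAm : (1:F) + a ≠ -1 := fun h => ha1 (by linear_combination h - h3)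
      have hM0 : a - 1 ≠ 0 := sub_ne_zero_of_ne ha1
      have hM1 : a - 1 ≠ 1 := fun h => ham (by linear_combination h + h3)
      have hMm : a - 1 ≠ -1 := fun h => ha (by linear_combination h)
      have hN0 : -a ≠ 0 := neg_ne_zero.mpr ha
      have hN1 : -a ≠ 1 := fun h => ham (by linear_combination -h)
      have hNm : -a ≠ -1 := fun h => ha1 (by linear_combination -h)
      have hB0 : -1 - a ≠ 0 := fun h => ham (by linear_combination -h)
      have hB1 : -1 - a ≠ 1 := fun h => ha1 (by linear_combination -h - h3)
      have hBm : -1 - a ≠ -1 := fun h => ha (by linear_combination -h)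
      have hC0 : 1 - a ≠ 0 := fun h => ha1 (by linear_combination -h)
      have hC1 : 1 - a ≠ 1 := fun h => ha (by linear_combination -h)
      have hCm : 1 - a ≠ -1 := fun h => ham (by linear_combination -h + h3)
      -- the six special-point equations
      have hE0 : f (0 + a) - f 0 = b → 1 - a = a * b := by
        intro h
        rw [zero_add, hfi a ha ha1 ham, hf0] at h
        field_simp at h
        linear_combination h
      have hEA : f (-a + a) - f (-a) = b → 1 + a = a * b := by
        intro h
        rw [neg_add_cancel, hf0, hfi (-a) hN0 hN1 hNm, inv_neg] at h
        field_simp at h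
        linear_combination h
      have hE1 : f (1 + a) - f 1 = b → a - 1 = (1 + a) * b := by
        intro h
        rw [hfi _ hA0 hA1 hAm, hf1] at h
        field_simp at h
        linear_combination h - h3
      have hEB : f (-1 - a + a) - f (-1 - a) = b → 1 = (1 + a) * b := by
        intro h
        rw [show (-1 - a + a : F) = -1 by ring, hfm, hfi _ hB0 hB1 hBm] at h
        field_simp at h
        linear_combination -h
      have hE2 : f (-1 + a) - f (-1) = b → 1 = (a - 1) * b := by
        intro h
        rw [show (-1 + a : F) = a - 1 by ring, hfm, hfi _ hM0 hM1 hMm] at h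
        field_simp at h
        linear_combination h
      have hEC : f (1 - a + a) - f (1 - a) = b → -1 - a = (a - 1) * b := by
        intro h
        rw [show (1 - a + a : F) = 1 by ring, hf1, hfi _ hC0 hC1 hCm] at h
        field_simp at h
        linear_combination -h - h3
      -- pairwise incompatibilities
      have k0A : 1 - a = a*b → 1 + a = a*b → False := fun e1 e2 =>
        ha (by linear_combination e1 - e2 + a*h3)
      have k1B : a - 1 = (1+a)*b → 1 = (1+a)*b → False := fun e1 e2 =>
        ham (by linear_combination e1 - e2 + h3)
      have k2C : 1 = (a-1)*b → -1 - a = (a-1)*b → False := fun e1 e2 =>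
        ha1 (by linear_combination e1 - e2 - h3)
      have k01 : 1 - a = a*b → a - 1 = (1+a)*b → False := by
        intro e1 e2
        have hq : (a-1)^2 = 0 := by linear_combination (1+a)*e1 - a*e2 + (a^2-a)*h3
        exact ha1 (sub_eq_zero.mp (pow_eq_zero_iff (two_ne_zero (α := ℕ)) |>.mp hq))
      have k0B : 1 - a = a*b → 1 = (1+a)*b → IsSquare (-1:F) := fun e1 e2 =>
        ⟨a - 1, by linear_combination (1+a)*e1 - a*e2 + (-1+a)*h3⟩
      have k02 : 1 - a = a*b → 1 = (a-1)*b → False := by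
        intro e1 e2
        have hq : (a+1)^2 = 0 := by linear_combination (1-a)*e1 + a*e2 + a*h3
        have h' := pow_eq_zero_iff (two_ne_zero (α := ℕ)) |>.mp hq
        exact ham (by linear_combination h')
      have k0C : 1 - a = a*b → -1 - a = (a-1)*b → False := fun e1 e2 =>
        one_ne_zero (α := F) (by linear_combination (1-a)*e1 + a*e2 + a*h3)
      have kA1 : 1 + a = a*b → a - 1 = (1+a)*b → False := fun e1 e2 =>
        one_ne_zero (α := F) (by linear_combination (1+a)*e1 - a*e2 - a*h3)
      have kAB : 1 + a = a*b → 1 = (1+a)*b → False := by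
        intro e1 e2
        have hq : (a-1)^2 = 0 := by linear_combination (1+a)*e1 - a*e2 - a*h3
        exact ha1 (sub_eq_zero.mp (pow_eq_zero_iff (two_ne_zero (α := ℕ)) |>.mp hq))
      have kA2 : 1 + a = a*b → 1 = (a-1)*b → IsSquare (-1:F) := fun e1 e2 =>
        ⟨a + 1, by linear_combination (1-a)*e1 + a*e2 + (-1-a)*h3⟩
      have kAC : 1 + a = a*b → -1 - a = (a-1)*b → False := by
        intro e1 e2
        have hq : (a+1)^2 = 0 := by linear_combination (1-a)*e1 + a*e2 + (a + a^2)*h3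
        have h' := pow_eq_zero_iff (two_ne_zero (α := ℕ)) |>.mp hq
        exact ham (by linear_combination h')
      have k12 : a - 1 = (1+a)*b → 1 = (a-1)*b → False := by
        intro e1 e2
        have hq : a^2 = 0 := by linear_combination (-1+a)*e1 + (-1-a)*e2 + a*h3
        exact ha (pow_eq_zero_iff (two_ne_zero (α := ℕ)) |>.mp hq)
      have k1C : a - 1 = (1+a)*b → -1 - a = (a-1)*b → IsSquare (-1:F) := fun e1 e2 =>
        ⟨a, by linear_combination (-1+a)*e1 + (-1-a)*e2 + (-1-a^2)*h3⟩
      have kB2 : 1 = (1+a)*b → 1 = (a-1)*b → False := fun e1 e2 =>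
        one_ne_zero (α := F) (by linear_combination (-1+a)*e1 + (-1-a)*e2 + h3)
      have kBC : 1 = (1+a)*b → -1 - a = (a-1)*b → False := by
        intro e1 e2
        have hq : a^2 = 0 := by linear_combination (-1+a)*e1 + (-1-a)*e2 - a*h3
        exact ha (pow_eq_zero_iff (two_ne_zero (α := ℕ)) |>.mp hq)
      -- quadratic part
      have hQcard : (univ.filter fun x : F => b*x^2 + a*b*x + a = 0).card ≤ 2 := by
        by_cases hb0 : b = 0
        · subst hb0
          have : (univ.filter fun x : F => (0:F)*x^2 + a*0*x + a = 0) = ∅ := by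
            apply filter_false_of_mem
            intro x _
            simpa using ha
          rw [this]
          simp
        · exact quad_card b (a*b) a hb0
      have hsubQ : S ⊆ (univ.filter fun x : F => b*x^2 + a*b*x + a = 0) ∪
          (S ∩ ({0, 1, -1, -a, 1 - a, -1 - a} : Finset F)) := by
        intro x hx
        by_cases hT : x ∈ ({0, 1, -1, -a, 1 - a, -1 - a} : Finset F)
        · exact mem_union_right _ (mem_inter.mpr ⟨hx, hT⟩)
        · apply mem_union_left
          simp only [mem_insert, mem_singleton, not_or] at hT
          obtain ⟨hx0, hx1, hxm, hxa, hxb, hxc⟩ := hT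
          have h := sol x hx
          have hxa0 : x + a ≠ 0 := fun hh => hxa (by linear_combination hh)
          have hxa1 : x + a ≠ 1 := fun hh => hxb (by linear_combination hh)
          have hxam : x + a ≠ -1 := fun hh => hxc (by linear_combination hh)
          rw [hfi _ hxa0 hxa1 hxam, hfi _ hx0 hx1 hxm] at h
          rw [mem_filter]
          refine ⟨mem_univ _, ?_⟩
          field_simp at h
          linear_combination -h
      -- cards of the three special pairs
      have hP0card : (S ∩ ({0, -a} : Finset F)).card ≤ 1 := by
        rw [card_le_one]
        intro x hx y hy
        rw [mem_inter] at hx hy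
        obtain ⟨hxS, hxP⟩ := hx
        obtain ⟨hyS, hyP⟩ := hy
        simp only [mem_insert, mem_singleton] at hxP hyP
        rcases hxP with rfl | rfl <;> rcases hyP with rfl | rfl
        · rfl
        · exact (k0A (hE0 (sol _ hxS)) (hEA (sol _ hyS))).elim
        · exact (k0A (hE0 (sol _ hyS)) (hEA (sol _ hxS))).elim
        · rfl
      have hP1card : (S ∩ ({1, -1 - a} : Finset F)).card ≤ 1 := by
        rw [card_le_one]
        intro x hx y hy
        rw [mem_inter] at hx hy
        obtain ⟨hxS, hxP⟩ := hx
        obtain ⟨hyS, hyP⟩ := hy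
        simp only [mem_insert, mem_singleton] at hxP hyP
        rcases hxP with rfl | rfl <;> rcases hyP with rfl | rfl
        · rfl
        · exact (k1B (hE1 (sol _ hxS)) (hEB (sol _ hyS))).elim
        · exact (k1B (hE1 (sol _ hyS)) (hEB (sol _ hxS))).elim
        · rfl
      have hP2card : (S ∩ ({-1, 1 - a} : Finset F)).card ≤ 1 := by
        rw [card_le_one]
        intro x hx y hy
        rw [mem_inter] at hx hy
        obtain ⟨hxS, hxP⟩ := hx
        obtain ⟨hyS, hyP⟩ := hy
        simp only [mem_insert, mem_singleton] at hxP hyP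
        rcases hxP with rfl | rfl <;> rcases hyP with rfl | rfl
        · rfl
        · exact (k2C (hE2 (sol _ hxS)) (hEC (sol _ hyS))).elim
        · exact (k2C (hE2 (sol _ hyS)) (hEC (sol _ hxS))).elim
        · rfl
      have hsplit : (S ∩ ({0, 1, -1, -a, 1 - a, -1 - a} : Finset F)).card ≤
          (S ∩ ({0, -a} : Finset F)).card +
          ((S ∩ ({1, -1 - a} : Finset F)).card + (S ∩ ({-1, 1 - a} : Finset F)).card) := by
        have hsub2 : S ∩ ({0, 1, -1, -a, 1 - a, -1 - a} : Finset F) ⊆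
            (S ∩ ({0, -a} : Finset F)) ∪
            ((S ∩ ({1, -1 - a} : Finset F)) ∪ (S ∩ ({-1, 1 - a} : Finset F))) := by
          intro x hx
          rw [mem_inter] at hx
          obtain ⟨hxS, hxT⟩ := hx
          simp only [mem_insert, mem_singleton] at hxT
          simp only [mem_union, mem_inter, mem_insert, mem_singleton]
          rcases hxT with h|h|h|h|h|h
          · exact Or.inl ⟨hxS, Or.inl h⟩
          · exact Or.inr (Or.inl ⟨hxS, Or.inl h⟩)
          · exact Or.inr (Or.inr ⟨hxS, Or.inl h⟩)
          · exact Or.inl ⟨hxS, Or.inr h⟩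
          · exact Or.inr (Or.inr ⟨hxS, Or.inr h⟩)
          · exact Or.inr (Or.inl ⟨hxS, Or.inr h⟩)
        exact le_trans (card_le_card hsub2)
          (le_trans (card_union_le _ _) (Nat.add_le_add_left (card_union_le _ _) _))
      have hmain : ∀ m : ℕ,
          (S ∩ ({0, 1, -1, -a, 1 - a, -1 - a} : Finset F)).card ≤ m → S.card ≤ 2 + m := by
        intro m hm
        refine le_trans (card_le_card hsubQ) (le_trans (card_union_le _ _) ?_)
        omega
      constructor
      · -- bound 4
        refine hmain 2 (le_trans hsplit ?_)
        by_cases h0 : (0:F) ∈ S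
        · have hP2empty : S ∩ ({-1, 1 - a} : Finset F) = ∅ := by
            rw [eq_empty_iff_forall_notMem]
            intro y hy
            rw [mem_inter] at hy
            obtain ⟨hyS, hyP⟩ := hy
            simp only [mem_insert, mem_singleton] at hyP
            rcases hyP with rfl | rfl
            · exact k02 (hE0 (sol _ h0)) (hE2 (sol _ hyS))
            · exact k0C (hE0 (sol _ h0)) (hEC (sol _ hyS))
          rw [hP2empty]
          simp only [card_empty]
          omega
        · by_cases hA : -a ∈ S
          · have hP1empty : S ∩ ({1, -1 - a} : Finset F) = ∅ := by
              rw [eq_empty_iff_forall_notMem]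
              intro y hy
              rw [mem_inter] at hy
              obtain ⟨hyS, hyP⟩ := hy
              simp only [mem_insert, mem_singleton] at hyP
              rcases hyP with rfl | rfl
              · exact kA1 (hEA (sol _ hA)) (hE1 (sol _ hyS))
              · exact kAB (hEA (sol _ hA)) (hEB (sol _ hyS))
            rw [hP1empty]
            simp only [card_empty]
            omega
          · have hP0empty : S ∩ ({0, -a} : Finset F) = ∅ := by
              rw [eq_empty_iff_forall_notMem]
              intro y hy
              rw [mem_inter] at hy
              obtain ⟨hyS, hyP⟩ := hy
              simp only [mem_insert, mem_singleton] at hyP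
              rcases hyP with rfl | rfl
              · exact h0 hyS
              · exact hA hyS
            rw [hP0empty]
            simp only [card_empty]
            omega
      · -- bound 3 assuming -1 is not a square
        intro hsq
        refine hmain 1 (le_trans hsplit ?_)
        by_cases h0 : (0:F) ∈ S
        · have hP1empty : S ∩ ({1, -1 - a} : Finset F) = ∅ := by
            rw [eq_empty_iff_forall_notMem]
            intro y hy
            rw [mem_inter] at hy
            obtain ⟨hyS, hyP⟩ := hy
            simp only [mem_insert, mem_singleton] at hyP
            rcases hyP with rfl | rfl
            · exact k01 (hE0 (sol _ h0)) (hE1 (sol _ hyS))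
            · exact hsq (k0B (hE0 (sol _ h0)) (hEB (sol _ hyS)))
          have hP2empty : S ∩ ({-1, 1 - a} : Finset F) = ∅ := by
            rw [eq_empty_iff_forall_notMem]
            intro y hy
            rw [mem_inter] at hy
            obtain ⟨hyS, hyP⟩ := hy
            simp only [mem_insert, mem_singleton] at hyP
            rcases hyP with rfl | rfl
            · exact k02 (hE0 (sol _ h0)) (hE2 (sol _ hyS))
            · exact k0C (hE0 (sol _ h0)) (hEC (sol _ hyS))
          rw [hP1empty, hP2empty]
          simp only [card_empty]
          omega
        · by_cases hA : -a ∈ S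
          · have hP1empty : S ∩ ({1, -1 - a} : Finset F) = ∅ := by
              rw [eq_empty_iff_forall_notMem]
              intro y hy
              rw [mem_inter] at hy
              obtain ⟨hyS, hyP⟩ := hy
              simp only [mem_insert, mem_singleton] at hyP
              rcases hyP with rfl | rfl
              · exact kA1 (hEA (sol _ hA)) (hE1 (sol _ hyS))
              · exact kAB (hEA (sol _ hA)) (hEB (sol _ hyS))
            have hP2empty : S ∩ ({-1, 1 - a} : Finset F) = ∅ := by
              rw [eq_empty_iff_forall_notMem]
              intro y hy
              rw [mem_inter] at hy
              obtain ⟨hyS, hyP⟩ := hy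
              simp only [mem_insert, mem_singleton] at hyP
              rcases hyP with rfl | rfl
              · exact hsq (kA2 (hEA (sol _ hA)) (hE2 (sol _ hyS)))
              · exact kAC (hEA (sol _ hA)) (hEC (sol _ hyS))
            rw [hP1empty, hP2empty]
            simp only [card_empty]
            omega
          · have hP0empty : S ∩ ({0, -a} : Finset F) = ∅ := by
              rw [eq_empty_iff_forall_notMem]
              intro y hy
              rw [mem_inter] at hy
              obtain ⟨hyS, hyP⟩ := hy
              simp only [mem_insert, mem_singleton] at hyP
              rcases hyP with rfl | rfl
              · exact h0 hyS
              · exact hA hyS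
            by_cases h1 : (1:F) ∈ S
            · have hP2empty : S ∩ ({-1, 1 - a} : Finset F) = ∅ := by
                rw [eq_empty_iff_forall_notMem]
                intro y hy
                rw [mem_inter] at hy
                obtain ⟨hyS, hyP⟩ := hy
                simp only [mem_insert, mem_singleton] at hyP
                rcases hyP with rfl | rfl
                · exact k12 (hE1 (sol _ h1)) (hE2 (sol _ hyS))
                · exact hsq (k1C (hE1 (sol _ h1)) (hEC (sol _ hyS)))
              rw [hP0empty, hP2empty]
              simp only [card_empty]
              omega
            · by_cases hB : -1 - a ∈ S
              · have hP2empty : S ∩ ({-1, 1 - a} : Finset F) = ∅ := by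
                  rw [eq_empty_iff_forall_notMem]
                  intro y hy
                  rw [mem_inter] at hy
                  obtain ⟨hyS, hyP⟩ := hy
                  simp only [mem_insert, mem_singleton] at hyP
                  rcases hyP with rfl | rfl
                  · exact kB2 (hEB (sol _ hB)) (hE2 (sol _ hyS))
                  · exact kBC (hEB (sol _ hB)) (hEC (sol _ hyS))
                rw [hP0empty, hP2empty]
                simp only [card_empty]
                omega
              · have hP1empty : S ∩ ({1, -1 - a} : Finset F) = ∅ := by
                  rw [eq_empty_iff_forall_notMem]
                  intro y hy
                  rw [mem_inter] at hy
                  obtain ⟨hyS, hyP⟩ := hy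
                  simp only [mem_insert, mem_singleton] at hyP
                  rcases hyP with rfl | rfl
                  · exact h1 hyS
                  · exact hB hyS
                rw [hP0empty, hP1empty]
                simp only [card_empty]
                omega

theorem du_inverse_compose_three_cycle_char_three (n : ℕ) (hn : 1 ≤ n)
    {F : Type*} [Field F] [Fintype F] [DecidableEq F]
    (hF : Fintype.card F = 3 ^ n)
    (σ : F → F)
    (hσ : ∀ x : F, σ x =
      if x = 0 then 1 else if x = 1 then -1 else if x = -1 then 0 else x)
    (f : F → F) (hf : ∀ x : F, f x = (σ x) ^ (3 ^ n - 2)) :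
    (Odd n → DU f = 3) ∧ (Even n → DU f = 4) := by
  -- characteristic-3 facts
  have hc := FiniteField.cast_card_eq_zero F
  rw [hF] at hc
  push_cast at hc
  have h3 : (3:F) = 0 := pow_eq_zero_iff (by omega : n ≠ 0) |>.mp hc
  have hne : (1:F) ≠ -1 := fun h => one_ne_zero (by linear_combination h3 - h : (1:F) = 0)
  have hm0 : (-1:F) ≠ 0 := by simp
  -- description of f
  have h32 : (3:ℕ)^1 ≤ 3^n := Nat.pow_le_pow_right (by norm_num) hn
  have hodd2 : Odd (3^n - 2) := by
    have ho : Odd ((3:ℕ)^n) := Odd.pow ⟨1, rfl⟩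
    obtain ⟨k, hk⟩ := ho
    exact ⟨k - 1, by omega⟩
  have hinv : ∀ y : F, y ≠ 0 → y ^ (3^n - 2) = y⁻¹ := by
    intro y hy
    have h1 : y ^ (3^n - 1) = 1 := by
      have h := FiniteField.pow_card_sub_one_eq_one y hy
      rwa [hF] at h
    have h2 : y * y ^ (3^n - 2) = 1 := by
      rw [← pow_succ', show 3^n - 2 + 1 = 3^n - 1 by omega, h1]
    exact eq_inv_of_mul_eq_one_right h2
  have hf0 : f 0 = 1 := by
    rw [hf, hσ, if_pos rfl, one_pow]
  have hf1 : f 1 = -1 := by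
    rw [hf, hσ, if_neg (one_ne_zero), if_pos rfl]
    exact Odd.neg_one_pow hodd2
  have hfm : f (-1) = 0 := by
    rw [hf, hσ, if_neg hm0, if_neg (fun h => hne h.symm), if_pos rfl]
    exact zero_pow (by omega)
  have hfi : ∀ x : F, x ≠ 0 → x ≠ 1 → x ≠ -1 → f x = x⁻¹ := by
    intro x hx0 hx1 hxm
    rw [hf, hσ, if_neg hx0, if_neg hx1, if_neg hxm]
    exact hinv x hx0
  have hDDT : ∀ a b : F, cDDT f 1 a b = (univ.filter fun x : F => f (x + a) - f x = b).card := by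
    intro a b
    unfold cDDT
    congr 1
    apply filter_congr
    intro x _
    rw [one_mul]
  constructor
  · -- odd case : DU f = 3
    intro hon
    have hns : ¬ IsSquare (-1:F) := by
      rw [FiniteField.isSquare_neg_one_iff, hF]
      simp only [ne_eq, not_not]
      obtain ⟨k, rfl⟩ := hon
      rw [pow_succ, pow_mul, Nat.mul_mod, Nat.pow_mod]
      norm_num
    unfold DU cDU
    apply le_antisymm
    · apply Finset.sup_le
      intro ab hab
      have ha := (mem_filter.mp hab).2 rfl
      rw [hDDT]
      exact (key_bound h3 f hf0 hf1 hfm hfi ab.1 ab.2 ha).2 hns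
    · have hmem : ((1,1) : F × F) ∈
          Finset.univ.filter (fun ab : F × F => (1:F) = 1 → ab.1 ≠ 0) := by
        simp
      refine le_trans ?_ (Finset.le_sup hmem)
      rw [hDDT]
      have hc3 : ({0, 1, -1} : Finset F).card = 3 := by
        rw [card_insert_of_notMem, card_insert_of_notMem, card_singleton]
        · simp only [mem_singleton]
          exact hne
        · simp only [mem_insert, mem_singleton]
          push_neg
          exact ⟨fun h => one_ne_zero h.symm, fun h => hm0 h.symm⟩
      refine le_trans (le_of_eq hc3.symm) (card_le_card ?_)
      intro x hx
      simp only [mem_insert, mem_singleton] at hx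
      simp only [mem_filter, mem_univ, true_and]
      rcases hx with rfl | rfl | rfl
      · rw [zero_add, hf1, hf0]
        linear_combination -h3
      · rw [show (1:F) + 1 = -1 by linear_combination h3, hfm, hf1]
        ring
      · rw [neg_add_cancel, hf0, hfm]
        ring
  · -- even case : DU f = 4
    intro hev
    have hsq : IsSquare (-1:F) := by
      rw [FiniteField.isSquare_neg_one_iff, hF]
      obtain ⟨k, rfl⟩ := hev
      rw [← two_mul, pow_mul, Nat.pow_mod]
      norm_num
    obtain ⟨i, hi⟩ := hsq
    have hi0 : i ≠ 0 := by
      rintro rfl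
      rw [mul_zero] at hi
      exact hm0 hi
    have hi1 : i ≠ 1 := by
      rintro rfl
      rw [mul_one] at hi
      exact hne hi.symm
    have him : i ≠ -1 := by
      rintro rfl
      rw [neg_mul_neg, mul_one] at hi
      exact hne hi.symm
    have h1pi0 : 1 + i ≠ 0 := fun h => him (by linear_combination h)
    have h1pi1 : 1 + i ≠ 1 := fun h => hi0 (by linear_combination h)
    have h1pim : 1 + i ≠ -1 := fun h => hi1 (by linear_combination h - h3)
    have h1mi0 : 1 - i ≠ 0 := fun h => hi1 (by linear_combination -h)
    have h1mi1 : 1 - i ≠ 1 := fun h => hi0 (by linear_combination -h)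
    have h1mim : 1 - i ≠ -1 := fun h => him (by linear_combination -h + h3)
    have hm1pi0 : -1 + i ≠ 0 := fun h => hi1 (by linear_combination h)
    have hm1pi1 : -1 + i ≠ 1 := fun h => him (by linear_combination h + h3)
    have hm1pim : -1 + i ≠ -1 := fun h => hi0 (by linear_combination h)
    have hm1mi0 : -1 - i ≠ 0 := fun h => him (by linear_combination -h)
    have hm1mi1 : -1 - i ≠ 1 := fun h => hi1 (by linear_combination -h - h3)
    have hm1mim : -1 - i ≠ -1 := fun h => hi0 (by linear_combination -h)
    have hv1 : (1 + i)⁻¹ = i - 1 := inv_eq_of_mul_eq_one_right (by linear_combination -hi - h3)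
    have hv2 : (1 - i)⁻¹ = -1 - i := inv_eq_of_mul_eq_one_right (by linear_combination -hi - h3)
    have hv3 : (-1 + i)⁻¹ = 1 + i := inv_eq_of_mul_eq_one_right (by linear_combination -hi - h3)
    have hv4 : (-1 - i)⁻¹ = 1 - i := inv_eq_of_mul_eq_one_right (by linear_combination -hi - h3)
    unfold DU cDU
    apply le_antisymm
    · apply Finset.sup_le
      intro ab hab
      have ha := (mem_filter.mp hab).2 rfl
      rw [hDDT]
      exact (key_bound h3 f hf0 hf1 hfm hfi ab.1 ab.2 ha).1
    · have hmem : ((i,i) : F × F) ∈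
          Finset.univ.filter (fun ab : F × F => (1:F) = 1 → ab.1 ≠ 0) := by
        simp [hi0]
      refine le_trans ?_ (Finset.le_sup hmem)
      rw [hDDT]
      have hc4 : ({1, 1 - i, 1 + i, -1 + i} : Finset F).card = 4 := by
        have e1 : (1:F) ∉ ({1 - i, 1 + i, -1 + i} : Finset F) := by
          simp only [mem_insert, mem_singleton]
          push_neg
          refine ⟨fun h => hi0 (by linear_combination h), fun h => hi0 (by linear_combination -h),
            fun h => him (by linear_combination -h + h3)⟩
        have e2 : (1 - i : F) ∉ ({1 + i, -1 + i} : Finset F) := by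
          simp only [mem_insert, mem_singleton]
          push_neg
          refine ⟨fun h => hi0 (by linear_combination h + i*h3),
            fun h => hi1 (by linear_combination h + (i - 1)*h3)⟩
        have e3 : (1 + i : F) ∉ ({-1 + i} : Finset F) := by
          simp only [mem_singleton]
          exact fun h => one_ne_zero (α := F) (by linear_combination -h + h3)
        rw [card_insert_of_notMem e1, card_insert_of_notMem e2, card_insert_of_notMem e3,
          card_singleton]
      refine le_trans (le_of_eq hc4.symm) (card_le_card ?_)
      intro x hx
      simp only [mem_insert, mem_singleton] at hx
      simp only [mem_filter, mem_univ, true_and]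
      rcases hx with rfl | rfl | rfl | rfl
      · rw [hfi _ h1pi0 h1pi1 h1pim, hf1, hv1]
        ring
      · rw [show (1 - i + i : F) = 1 by ring, hf1, hfi _ h1mi0 h1mi1 h1mim, hv2]
        ring
      · rw [show (1 + i + i : F) = 1 - i by linear_combination i*h3,
          hfi _ h1mi0 h1mi1 h1mim, hfi _ h1pi0 h1pi1 h1pim, hv2, hv1]
        linear_combination -i*h3
      · rw [show (-1 + i + i : F) = -1 - i by linear_combination i*h3,
          hfi _ hm1mi0 hm1mi1 hm1mim, hfi _ hm1pi0 hm1pi1 hm1pim, hv4, hv3]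
        linear_combination -i*h3
end

section
/- Let p be an odd prime, n ≥ 1, f, h : F_{p^n} → F_{p^n}, α ∈ F_{p^n}, and let Tr : F_{p^n} → F_p denote the absolute trace map, with values of F_p viewed inside F_{p^n} via the canonical embedding. Define g(X) = f(X) + α·Tr(h(X)). Then the (classical) differential uniformity of g satisfies Δ_g ≤ p·Δ_f. Moreover, if f(X) = X^{p^n−2} is the inverse function, then Δ_g ≤ 2(p+1). -/
open Finset

theorem du_switched (p n : ℕ) (hp : p.Prime) (hpodd : Odd p) (hn : 1 ≤ n)
    {F : Type*} [Field F] [Fintype F] [DecidableEq F]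
    (hF : Fintype.card F = p ^ n)
    (f h : F → F) (α : F)
    (Tr : F → F) (hTr : ∀ x : F, Tr x = ∑ i ∈ Finset.range n, x ^ (p ^ i))
    (g : F → F) (hg : ∀ x : F, g x = f x + α * Tr (h x)) :
    DU g ≤ p * DU f ∧
    ((∀ x : F, f x = x ^ (p ^ n - 2)) → DU g ≤ 2 * (p + 1)) := by
  classical
  have hp2 : 2 ≤ p := hp.two_le
  haveI hfp : Fact p.Prime := ⟨hp⟩
  -- characteristic p
  haveI hchar : CharP F p := by
    have hq : (ringChar F).Prime := CharP.char_is_prime F (ringChar F)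
    obtain ⟨m, hm, hcard⟩ := FiniteField.card F (ringChar F)
    have hpe : p = ringChar F := by
      have hd : p ∣ (ringChar F) ^ (m : ℕ) := by
        rw [← hcard, hF]; exact dvd_pow_self p (by omega)
      exact (Nat.prime_dvd_prime_iff_eq hp hq).mp (hp.dvd_of_dvd_pow hd)
    exact hpe ▸ ringChar.charP F
  have hpow : ∀ y : F, y ^ p ^ n = y := by
    intro y; rw [← hF]; exact FiniteField.pow_card y
  -- trace values are fixed by Frobenius
  have hTrfix : ∀ y : F, (Tr y) ^ p = Tr y := by
    intro y
    rw [hTr, sum_pow_char]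
    have h1 : ∀ i ∈ Finset.range n, (y ^ p ^ i) ^ p = y ^ p ^ (i + 1) := by
      intro i _; rw [← pow_mul, pow_succ]
    rw [Finset.sum_congr rfl h1]
    have h2 : ∑ i ∈ Finset.range n, y ^ p ^ (i + 1)
        = ∑ i ∈ Finset.range (n + 1), y ^ p ^ i - y ^ p ^ 0 := by
      rw [Finset.sum_range_succ']; ring
    rw [h2, Finset.sum_range_succ, hpow y]
    simp
  -- the set of Frobenius-fixed elements has at most p elements
  set T : Finset F := Finset.univ.filter (fun t : F => t ^ p = t) with hT
  have hTcard : T.card ≤ p := by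
    have hPne : ((Polynomial.X : Polynomial F) ^ p - Polynomial.X) ≠ 0 := by
      intro h0
      have := congrArg (fun q : Polynomial F => q.coeff p) h0
      simp only [Polynomial.coeff_sub, Polynomial.coeff_X_pow, Polynomial.coeff_X,
        if_pos rfl, if_neg (show ¬ (1 = p) by omega), Polynomial.coeff_zero] at this
      simp at this
    have hsub : T ⊆ ((Polynomial.X : Polynomial F) ^ p - Polynomial.X).roots.toFinset := by
      intro t ht
      rw [hT, Finset.mem_filter] at ht
      rw [Multiset.mem_toFinset, Polynomial.mem_roots hPne]
      simp [Polynomial.IsRoot, sub_eq_zero, ht.2]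
    calc T.card ≤ ((Polynomial.X : Polynomial F) ^ p - Polynomial.X).roots.toFinset.card :=
          Finset.card_le_card hsub
      _ ≤ ((Polynomial.X : Polynomial F) ^ p - Polynomial.X).roots.card :=
          Multiset.toFinset_card_le _
      _ ≤ ((Polynomial.X : Polynomial F) ^ p - Polynomial.X).natDegree :=
          Polynomial.card_roots' _
      _ ≤ p := by
          refine le_trans (Polynomial.natDegree_sub_le _ _) ?_
          simp [Polynomial.natDegree_X_pow, Polynomial.natDegree_X]
          omega
  -- the Frobenius-fixed difference
  have hphi : ∀ a x : F, Tr (h (x + a)) - Tr (h x) ∈ T := by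
    intro a x
    rw [hT, Finset.mem_filter]
    refine ⟨Finset.mem_univ _, ?_⟩
    rw [sub_pow_char _ _, hTrfix, hTrfix]
  -- key reduction from g differences to f differences
  have hred : ∀ a b x : F, g (x + a) - 1 * g x = b →
      f (x + a) - 1 * f x = b - α * (Tr (h (x + a)) - Tr (h x)) := by
    intro a b x hx
    rw [hg, hg] at hx
    linear_combination hx
  -- DDT entries of f are bounded by DU f
  have hDUf : ∀ a b : F, a ≠ 0 → cDDT f 1 a b ≤ DU f := by
    intro a b ha
    exact Finset.le_sup (f := fun ab : F × F => cDDT f 1 ab.1 ab.2)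
      (by simp [ha] : ((a, b) : F × F) ∈
        Finset.univ.filter (fun ab : F × F => (1 : F) = 1 → ab.1 ≠ 0))
  -- part 1 pointwise bound
  have key1 : ∀ a b : F, a ≠ 0 → cDDT g 1 a b ≤ p * DU f := by
    intro a b ha
    have hsubS : Finset.univ.filter (fun x : F => g (x + a) - 1 * g x = b) ⊆
        T.biUnion (fun t => Finset.univ.filter
          (fun x : F => f (x + a) - 1 * f x = b - α * t)) := by
      intro x hx
      rw [Finset.mem_filter] at hx
      rw [Finset.mem_biUnion]
      exact ⟨Tr (h (x + a)) - Tr (h x), hphi a x,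
        Finset.mem_filter.mpr ⟨Finset.mem_univ _, hred a b x hx.2⟩⟩
    calc cDDT g 1 a b
        ≤ (T.biUnion (fun t => Finset.univ.filter
            (fun x : F => f (x + a) - 1 * f x = b - α * t))).card :=
          Finset.card_le_card hsubS
      _ ≤ ∑ t ∈ T, (Finset.univ.filter
            (fun x : F => f (x + a) - 1 * f x = b - α * t)).card :=
          Finset.card_biUnion_le
      _ ≤ ∑ _t ∈ T, DU f := Finset.sum_le_sum (fun t _ => hDUf a (b - α * t) ha)
      _ = T.card * DU f := by rw [Finset.sum_const, smul_eq_mul]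
      _ ≤ p * DU f := Nat.mul_le_mul_right _ hTcard
  constructor
  · -- DU g ≤ p * DU f
    apply Finset.sup_le
    intro ab hab
    rw [Finset.mem_filter] at hab
    exact key1 ab.1 ab.2 (hab.2 rfl)
  · -- inverse function case
    intro hf
    have hq2 : 2 ≤ p ^ n := le_trans hp2 (Nat.le_self_pow (by omega) p)
    have hinv : ∀ y : F, y ≠ 0 → y ^ (p ^ n - 2) = y⁻¹ := by
      intro y hy
      have h1 : y ^ (p ^ n - 1) = 1 := by
        rw [← hF]; exact FiniteField.pow_card_sub_one_eq_one y hy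
      have h2 : y ^ (p ^ n - 2) * y = 1 := by
        rw [← pow_succ, (by omega : p ^ n - 2 + 1 = p ^ n - 1), h1]
      exact eq_inv_of_mul_eq_one_left h2
    have key2 : ∀ a b : F, a ≠ 0 → cDDT g 1 a b ≤ 2 * (p + 1) := by
      intro a b ha
      have hPne : ∀ c : F, (Polynomial.C c * Polynomial.X ^ 2
          + Polynomial.C (c * a) * Polynomial.X + Polynomial.C a : Polynomial F) ≠ 0 := by
        intro c h0
        have := congrArg (fun q : Polynomial F => q.coeff 0) h0
        simp at this
        exact ha this
      have hsubS : Finset.univ.filter (fun x : F => g (x + a) - 1 * g x = b) ⊆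
          insert 0 (insert (-a) (T.biUnion fun t =>
            (Polynomial.C (b - α * t) * Polynomial.X ^ 2
              + Polynomial.C ((b - α * t) * a) * Polynomial.X
              + Polynomial.C a : Polynomial F).roots.toFinset)) := by
        intro x hx
        rw [Finset.mem_filter] at hx
        by_cases hx0 : x = 0
        · simp [hx0]
        by_cases hxa : x = -a
        · simp [hxa]
        simp only [Finset.mem_insert, Finset.mem_biUnion]
        right; right
        refine ⟨Tr (h (x + a)) - Tr (h x), hphi a x, ?_⟩
        set c : F := b - α * (Tr (h (x + a)) - Tr (h x)) with hc
        have hfx : f (x + a) - 1 * f x = c := hred a b x hx.2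
        have hxane : x + a ≠ 0 := by
          intro hh; exact hxa (by linear_combination hh)
        rw [hf, hf, hinv _ hxane, hinv _ hx0, one_mul] at hfx
        rw [Multiset.mem_toFinset, Polynomial.mem_roots (hPne c)]
        show Polynomial.eval x _ = 0
        simp only [Polynomial.eval_add, Polynomial.eval_mul, Polynomial.eval_C,
          Polynomial.eval_X, Polynomial.eval_pow]
        rw [← hfx]
        field_simp
        ring
      calc cDDT g 1 a b
          ≤ (insert (0 : F) (insert (-a) (T.biUnion fun t =>
              (Polynomial.C (b - α * t) * Polynomial.X ^ 2
                + Polynomial.C ((b - α * t) * a) * Polynomial.X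
                + Polynomial.C a : Polynomial F).roots.toFinset))).card :=
            Finset.card_le_card hsubS
        _ ≤ (insert (-a) (T.biUnion fun t =>
              (Polynomial.C (b - α * t) * Polynomial.X ^ 2
                + Polynomial.C ((b - α * t) * a) * Polynomial.X
                + Polynomial.C a : Polynomial F).roots.toFinset)).card + 1 :=
            Finset.card_insert_le _ _
        _ ≤ ((T.biUnion fun t =>
              (Polynomial.C (b - α * t) * Polynomial.X ^ 2
                + Polynomial.C ((b - α * t) * a) * Polynomial.X
                + Polynomial.C a : Polynomial F).roots.toFinset).card + 1) + 1 :=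
            Nat.add_le_add_right (Finset.card_insert_le _ _) 1
        _ ≤ (∑ t ∈ T, ((Polynomial.C (b - α * t) * Polynomial.X ^ 2
                + Polynomial.C ((b - α * t) * a) * Polynomial.X
                + Polynomial.C a : Polynomial F).roots.toFinset).card + 1) + 1 := by
            exact Nat.add_le_add_right (Nat.add_le_add_right Finset.card_biUnion_le 1) 1
        _ ≤ (∑ _t ∈ T, 2 + 1) + 1 := by
            refine Nat.add_le_add_right (Nat.add_le_add_right ?_ 1) 1
            refine Finset.sum_le_sum (fun t _ => ?_)
            calc ((Polynomial.C (b - α * t) * Polynomial.X ^ 2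
                + Polynomial.C ((b - α * t) * a) * Polynomial.X
                + Polynomial.C a : Polynomial F).roots.toFinset).card
                ≤ (Polynomial.C (b - α * t) * Polynomial.X ^ 2
                  + Polynomial.C ((b - α * t) * a) * Polynomial.X
                  + Polynomial.C a : Polynomial F).roots.card :=
                  Multiset.toFinset_card_le _
              _ ≤ (Polynomial.C (b - α * t) * Polynomial.X ^ 2
                  + Polynomial.C ((b - α * t) * a) * Polynomial.X
                  + Polynomial.C a : Polynomial F).natDegree :=
                  Polynomial.card_roots' _
              _ ≤ 2 := by compute_degree
        _ = T.card * 2 + 2 := by rw [Finset.sum_const, smul_eq_mul]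
        _ ≤ p * 2 + 2 := by
            exact Nat.add_le_add_right (Nat.mul_le_mul_right 2 hTcard) 2
        _ = 2 * (p + 1) := by ring
    apply Finset.sup_le
    intro ab hab
    rw [Finset.mem_filter] at hab
    exact key2 ab.1 ab.2 (hab.2 rfl)
end
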